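/- arXiv:1605.09558 — 2 statements merged into one kernel-verified Lean document; each statement's English description precedes it below -/
import Mathlib

section
/- Let S be a binary derivation tree (each internal node has exactly two children) with leaves labeled by characters so that the leaf sequence spells a string T, and let P be a substring of T with |P| > 1 occurring at position p. Then there is a unique lowest node v of the tree whose leaf interval covers [p, p+|P|−1]; moreover v is internal, and P splits as P = P₁P₂ with 1 ≤ |P₁| < |P|, where P₁ is a suffix of the string spelled by the left child of v and P₂ is a prefix of the string spelled by the right child of v. -/
/-- A binary derivation tree: every internal node has exactly two children and
leaves are labeled by characters. -/
inductive BTree (α : Type*) where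
  | leaf : α → BTree α
  | node : BTree α → BTree α → BTree α

/-- The string spelled by a tree (concatenation of leaf labels, left to right). -/
def BTree.yld {α : Type*} : BTree α → List α
  | .leaf a => [a]
  | .node l r => l.yld ++ r.yld

/-- The subtree at a given path (`false` = go left, `true` = go right). -/
def BTree.sub {α : Type*} : BTree α → List Bool → Option (BTree α)
  | t, [] => some t
  | .leaf _, _ :: _ => none
  | .node l r, b :: bs => if b then r.sub bs else l.sub bs

/-- The starting leaf index (0-based) of the subtree at a given path. -/
def BTree.off {α : Type*} : BTree α → List Bool → ℕ
  | _, [] => 0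
  | .leaf _, _ :: _ => 0
  | .node l r, b :: bs => if b then l.yld.length + r.off bs else l.off bs

/-- The node at path `π` exists and its leaf interval covers `[p, p + m)`. -/
def Covers {α : Type*} (t : BTree α) (π : List Bool) (p m : ℕ) : Prop :=
  ∃ u, t.sub π = some u ∧ t.off π ≤ p ∧ p + m ≤ t.off π + u.yld.length

theorem sub_off_bound {α : Type*} : ∀ (π : List Bool) (t u : BTree α),
    t.sub π = some u → t.off π + u.yld.length ≤ t.yld.length := by
  intro π
  induction π with
  | nil => intro t u h; simp [BTree.sub] at h; subst h; simp [BTree.off]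
  | cons b bs ih =>
    intro t u h
    cases t with
    | leaf a => simp [BTree.sub] at h
    | node l r =>
      cases b with
      | false =>
        simp only [BTree.sub, BTree.off, Bool.false_eq_true, if_false] at h ⊢
        have := ih l u h
        simp [BTree.yld]; omega
      | true =>
        simp only [BTree.sub, BTree.off, if_true] at h ⊢
        have := ih r u h
        simp [BTree.yld]; omega

theorem covers_le {α : Type*} {t : BTree α} {bs : List Bool} {p m : ℕ}
    (h : Covers t bs p m) : p + m ≤ t.yld.length := by
  obtain ⟨u, hu, h1, h2⟩ := h
  have := sub_off_bound bs t u hu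
  omega

theorem covers_nil {α : Type*} {t : BTree α} {p m : ℕ} :
    Covers t [] p m ↔ p + m ≤ t.yld.length := by
  simp [Covers, BTree.sub, BTree.off]

theorem covers_false {α : Type*} {l r : BTree α} {bs : List Bool} {p m : ℕ} :
    Covers (BTree.node l r) (false :: bs) p m ↔ Covers l bs p m := by
  simp [Covers, BTree.sub, BTree.off]

theorem covers_true {α : Type*} {l r : BTree α} {bs : List Bool} {p m : ℕ} :
    Covers (BTree.node l r) (true :: bs) p m ↔
      l.yld.length ≤ p ∧ Covers r bs (p - l.yld.length) m := by
  simp only [Covers, BTree.sub, BTree.off, if_true]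
  constructor
  · rintro ⟨u, hu, h1, h2⟩
    exact ⟨by omega, u, hu, by omega, by omega⟩
  · rintro ⟨hl, u, hu, h1, h2⟩
    exact ⟨u, hu, by omega, by omega⟩

theorem prefix_append_left {α : Type*} {P x y : List α} (h : P <+: x ++ y)
    (hlen : P.length ≤ x.length) : P <+: x := by
  obtain ⟨s, hs⟩ := h
  have h2 : (x ++ y).take P.length = P := by
    rw [← hs, List.take_append_of_le_length (le_refl _), List.take_length]
  rw [← h2, List.take_append_of_le_length hlen]
  exact List.take_prefix _ _

/-- for an occurrence (at 0-based position `p`) of a pattern `P`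
with `|P| > 1` in the string spelled by a binary derivation tree, there is a
unique lowest node covering the occurrence; it is internal, and `P = P₁P₂`
with `1 ≤ |P₁| < |P|`, `P₁` a suffix of the left child's string and `P₂` a
prefix of the right child's string. -/
theorem lowest_covering_node {α : Type*} (t : BTree α) (P : List α) (p : ℕ)
    (hP : 1 < P.length) (hocc : P <+: t.yld.drop p) :
    (∃! π : List Bool,
      Covers t π p P.length ∧ ∀ b, ¬ Covers t (π ++ [b]) p P.length) ∧
    (∀ π : List Bool,
      Covers t π p P.length → (∀ b, ¬ Covers t (π ++ [b]) p P.length) →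
      ∃ l r P₁ P₂, t.sub π = some (.node l r) ∧ P = P₁ ++ P₂ ∧
        1 ≤ P₁.length ∧ P₁.length < P.length ∧
        P₁ <:+ l.yld ∧ P₂ <+: r.yld) := by
  induction t generalizing p with
  | leaf a =>
    exfalso
    have := hocc.length_le
    simp [BTree.yld] at this
    omega
  | node l r ihl ihr =>
    have hlen := hocc.length_le
    rw [List.length_drop] at hlen
    simp only [BTree.yld, List.length_append] at hlen
    have htot : p + P.length ≤ l.yld.length + r.yld.length := by omega
    rcases le_or_gt (p + P.length) l.yld.length with hc1 | hc1
    · -- occurrence fully in left child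
      have hdl : (BTree.yld (BTree.node l r)).drop p = l.yld.drop p ++ r.yld.drop (p - l.yld.length) := by
        simp only [BTree.yld]; exact List.drop_append
      have hocc' : P <+: l.yld.drop p := by
        rw [hdl] at hocc
        exact prefix_append_left hocc (by rw [List.length_drop]; omega)
      obtain ⟨⟨π₀, ⟨hc₀, hm₀⟩, huq₀⟩, hsp₀⟩ := ihl p hocc'
      have key : ∀ π, Covers (BTree.node l r) π p P.length →
          (∀ b, ¬ Covers (BTree.node l r) (π ++ [b]) p P.length) →
          ∃ bs, π = false :: bs ∧ Covers l bs p P.length ∧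
            ∀ b, ¬ Covers l (bs ++ [b]) p P.length := by
        intro π hcov hmax
        match π with
        | [] =>
          exfalso
          exact hmax false (covers_false.mpr ⟨l, by simp [BTree.sub], by simp [BTree.off]; omega⟩)
        | true :: bs =>
          exfalso
          have := (covers_true.mp hcov).1
          omega
        | false :: bs =>
          refine ⟨bs, rfl, covers_false.mp hcov, fun b hb => hmax b ?_⟩
          exact covers_false.mpr hb
      constructor
      · refine ⟨false :: π₀, ⟨covers_false.mpr hc₀, fun b hb => hm₀ b (covers_false.mp hb)⟩, ?_⟩
        intro π ⟨hcov, hmax⟩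
        obtain ⟨bs, rfl, h1, h2⟩ := key π hcov hmax
        rw [huq₀ bs ⟨h1, h2⟩]
      · intro π hcov hmax
        obtain ⟨bs, rfl, h1, h2⟩ := key π hcov hmax
        obtain ⟨l', r', P₁, P₂, hsub, hrest⟩ := hsp₀ bs h1 h2
        exact ⟨l', r', P₁, P₂, by simpa [BTree.sub] using hsub, hrest⟩
    · rcases le_or_gt l.yld.length p with hc2 | hc2
      · -- occurrence fully in right child
        have hdl : (BTree.yld (BTree.node l r)).drop p = l.yld.drop p ++ r.yld.drop (p - l.yld.length) := by
          simp only [BTree.yld]; exact List.drop_append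
        have hocc' : P <+: r.yld.drop (p - l.yld.length) := by
          rw [hdl, List.drop_eq_nil_of_le hc2, List.nil_append] at hocc
          exact hocc
        obtain ⟨⟨π₀, ⟨hc₀, hm₀⟩, huq₀⟩, hsp₀⟩ := ihr (p - l.yld.length) hocc'
        have key : ∀ π, Covers (BTree.node l r) π p P.length →
            (∀ b, ¬ Covers (BTree.node l r) (π ++ [b]) p P.length) →
            ∃ bs, π = true :: bs ∧ Covers r bs (p - l.yld.length) P.length ∧
              ∀ b, ¬ Covers r (bs ++ [b]) (p - l.yld.length) P.length := by
          intro π hcov hmax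
          match π with
          | [] =>
            exfalso
            exact hmax true (covers_true.mpr ⟨hc2, r, by simp [BTree.sub],
              by simp [BTree.off], by simp [BTree.off]; omega⟩)
          | false :: bs =>
            exfalso
            have := covers_le (covers_false.mp hcov)
            omega
          | true :: bs =>
            refine ⟨bs, rfl, (covers_true.mp hcov).2, fun b hb => hmax b ?_⟩
            exact covers_true.mpr ⟨hc2, hb⟩
        constructor
        · refine ⟨true :: π₀, ⟨covers_true.mpr ⟨hc2, hc₀⟩,
            fun b hb => hm₀ b (covers_true.mp hb).2⟩, ?_⟩
          intro π ⟨hcov, hmax⟩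
          obtain ⟨bs, rfl, h1, h2⟩ := key π hcov hmax
          rw [huq₀ bs ⟨h1, h2⟩]
        · intro π hcov hmax
          obtain ⟨bs, rfl, h1, h2⟩ := key π hcov hmax
          obtain ⟨l', r', P₁, P₂, hsub, hrest⟩ := hsp₀ bs h1 h2
          exact ⟨l', r', P₁, P₂, by simpa [BTree.sub] using hsub, hrest⟩
      · -- occurrence straddles the two children: this node is the lowest
        have key : ∀ π, Covers (BTree.node l r) π p P.length → π = [] := by
          intro π hcov
          match π with
          | [] => rfl
          | false :: bs =>
            exfalso
            have := covers_le (covers_false.mp hcov)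
            omega
          | true :: bs =>
            exfalso
            have := (covers_true.mp hcov).1
            omega
        have hcovnil : Covers (BTree.node l r) [] p P.length := by
          rw [covers_nil]; simp [BTree.yld]; omega
        have hmaxnil : ∀ b, ¬ Covers (BTree.node l r) ([] ++ [b]) p P.length := by
          intro b hb
          cases b
          · have := covers_le (covers_false.mp hb); omega
          · have := (covers_true.mp hb).1; omega
        constructor
        · exact ⟨[], ⟨hcovnil, hmaxnil⟩, fun π ⟨hcov, _⟩ => key π hcov⟩
        · intro π hcov hmax
          obtain rfl := key π hcov
          set k := l.yld.length - p with hk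
          obtain ⟨s, hs⟩ := hocc
          have hdl : (BTree.yld (BTree.node l r)).drop p = l.yld.drop p ++ r.yld := by
            simp only [BTree.yld]
            rw [List.drop_append, Nat.sub_eq_zero_of_le (by omega), List.drop_zero]
          rw [hdl] at hs
          have hklen : k ≤ P.length := by omega
          have hxlen : (l.yld.drop p).length = k := by rw [List.length_drop]
          have htake : P.take k = l.yld.drop p := by
            have := congrArg (List.take k) hs
            rw [List.take_append_of_le_length hklen, ← hxlen,
              List.take_left] at this
            rw [hxlen] at this
            exact this
          have hdrop : P.drop k ++ s = r.yld := by
            have := congrArg (List.drop k) hs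
            rw [List.drop_append, Nat.sub_eq_zero_of_le hklen, List.drop_zero,
              List.drop_append, ← hxlen, List.drop_length, Nat.sub_self,
              List.drop_zero, List.nil_append] at this
            rw [hxlen] at this
            exact this
          refine ⟨l, r, P.take k, P.drop k, rfl, (List.take_append_drop k P).symm, ?_, ?_, ?_, ?_⟩
          · rw [List.length_take]; omega
          · rw [List.length_take]; omega
          · rw [htake]; exact List.drop_suffix p l.yld
          · exact ⟨s, hdrop⟩
end

section
/- If |Epow(Shrink_0(P))| = 1, i.e., P = a^{|P|} consists of a single repeated character a, and P occurs crossing the boundary of a node X → X_ℓX_r (or within a run node X → X̂^k), then in a signature-encoding-style grammar where maximal runs of equal symbols are grouped into a single run production, every primary occurrence (X,j) of P = a^{|P|} satisfies j = 1 and X is a run production X → â^d with val(â) = a and d ≥ |P|. -/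
/-- Right-hand sides of an RLSLP: a terminal character, a pair of variables, or
a power (run-length production) `x^k`. -/
inductive Rhs (α : Type*) (n : ℕ) where
  | chr : α → Rhs α n
  | pair : Fin n → Fin n → Rhs α n
  | pow : Fin n → ℕ → Rhs α n

/-- in a signature-encoding-style RLSLP — where maximal runs of
equal characters are grouped into run productions, so that the boundary
characters across any pair split, and across the copies of any power of a
variable deriving a string of length `> 1`, are distinct — every primary
occurrence `(X, j)` (0-based `j`) of a unary pattern `P = a^{|P|}` with
`|P| > 1` satisfies `j = 0`, and `X` is a run production `X → x^k` with
`val x = [a]` and `k ≥ |P|`. -/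
theorem unary_pattern_primary_occurrence {α : Type*} {n : ℕ}
    (rhs : Fin n → Rhs α n) (val : Fin n → List α) (leftLen : Fin n → ℕ)
    (hval : ∀ i : Fin n,
      (∀ a, rhs i = .chr a → val i = [a]) ∧
      (∀ l r, rhs i = .pair l r → val i = val l ++ val r) ∧
      (∀ x k, rhs i = .pow x k → val i = (List.replicate k (val x)).flatten))
    (hleft : ∀ i : Fin n,
      (∀ a, rhs i = .chr a → leftLen i = 0) ∧
      (∀ l r, rhs i = .pair l r → leftLen i = (val l).length) ∧
      (∀ x k, rhs i = .pow x k → leftLen i = (val x).length))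
    (hne : ∀ i : Fin n, val i ≠ [])
    (hposk : ∀ (i x : Fin n) (k : ℕ), rhs i = .pow x k → 1 ≤ k)
    (hbpair : ∀ (i l r : Fin n), rhs i = .pair l r →
      (val l).getLast? ≠ (val r).head?)
    (hbpow : ∀ (i x : Fin n) (k : ℕ), rhs i = .pow x k →
      1 < (val x).length → (val x).getLast? ≠ (val x).head?)
    (a : α) (P : List α) (hP : 1 < P.length)
    (hPa : P = List.replicate P.length a)
    (X : Fin n) (j : ℕ)
    (hocc : P <+: (val X).drop j)
    (h1 : j < leftLen X) (h2 : leftLen X < j + P.length) :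
    j = 0 ∧ ∃ (x : Fin n) (k : ℕ),
      rhs X = .pow x k ∧ val x = [a] ∧ P.length ≤ k := by

  obtain ⟨t, ht⟩ := hocc
  have hidx : ∀ m, m < P.length → (val X)[j+m]? = some a := by
    intro m hm
    have : (val X)[j+m]? = ((val X).drop j)[m]? := List.getElem?_drop.symm
    rw [this, ← ht, List.getElem?_append_left hm, hPa]
    simp [List.getElem?_replicate, hm]
  have hlenP : j + P.length ≤ (val X).length := by
    have hlen : P.length + t.length = (val X).length - j := by
      have := congrArg List.length ht
      simpa using this
    have hPne : P ≠ [] := by intro h; rw [h] at hP; simp at hP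
    have hdp : (val X).drop j ≠ [] := by
      rw [← ht]; simp [hPne]
    have hj : j < (val X).length := by
      by_contra hj
      exact hdp (List.drop_eq_nil_of_le (le_of_not_gt hj))
    omega
  have key : ∀ (L R : List α), val X = L ++ R → L ≠ [] → L.length = leftLen X →
      L.getLast? = some a ∧ R.head? = some a := by
    intro L R hv hL hlL
    constructor
    · have h := hidx (L.length - 1 - j) (by omega)
      have hLpos : 0 < L.length := List.length_pos_iff.2 hL
      have hjm : j + (L.length - 1 - j) = L.length - 1 := by omega
      rw [hjm, hv, List.getElem?_append_left (by omega)] at h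
      rw [List.getLast?_eq_getElem?]; exact h
    · have h := hidx (L.length - j) (by omega)
      have hjm : j + (L.length - j) = L.length := by omega
      rw [hjm, hv, List.getElem?_append_right (le_refl _)] at h
      simpa [List.head?_eq_getElem?] using h
  rcases hr : rhs X with a' | ⟨l, r⟩ | ⟨x, k⟩
  · have := (hleft X).1 a' hr
    omega
  · exfalso
    have hv := (hval X).2.1 l r hr
    have hl := (hleft X).2.1 l r hr
    obtain ⟨hlast, hhead⟩ := key (val l) (val r) hv (hne l) hl.symm
    exact hbpair X l r hr (hlast.trans hhead.symm)
  · have hv := (hval X).2.2 x k hr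
    have hl := (hleft X).2.2 x k hr
    have hk := hposk X x k hr
    have hvne := hne x
    have hlenX : (val X).length = k * (val x).length := by
      simp [hv, List.length_flatten, List.sum_replicate, smul_eq_mul]
    by_cases hv1 : (val x).length ≤ 1
    · -- val x is a singleton
      have hlen1 : (val x).length = 1 := by
        have := List.length_pos_iff.2 hvne; omega
      obtain ⟨b, hb⟩ := List.length_eq_one_iff.1 hlen1
      have hj0 : j = 0 := by omega
      have hba : b = a := by
        have h := hidx 0 (by omega)
        have hv' : val X = val x ++ (List.replicate (k-1) (val x)).flatten := by
          rw [hv]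
          obtain ⟨k', rfl⟩ : ∃ k', k = k' + 1 := ⟨k - 1, by omega⟩
          simp [List.replicate_succ]
        rw [hj0, hv', hb] at h
        simpa using h
      refine ⟨hj0, x, k, rfl, by rw [hb, hba], ?_⟩
      have := hlenP
      rw [hlenX, hlen1] at this
      omega
    · exfalso
      push_neg at hv1
      have hk2 : 2 ≤ k := by
        rcases Nat.lt_or_ge k 2 with h | h
        · interval_cases k <;> omega
        · exact h
      obtain ⟨k', rfl⟩ : ∃ k', k = k' + 2 := ⟨k - 2, by omega⟩
      have hv' : val X = val x ++ (val x ++ (List.replicate k' (val x)).flatten) := by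
        rw [hv, List.replicate_succ, List.replicate_succ]
        simp
      obtain ⟨hlast, hhead⟩ := key (val x) _ hv' hvne hl.symm
      have hhead' : (val x).head? = some a := by
        rw [List.head?_append_of_ne_nil _ hvne] at hhead  -- may not exist; fix below
        exact hhead
      exact hbpow X x (k' + 2) hr hv1 (hlast.trans hhead'.symm)
end
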